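/- Let L > 0 and let μ be a Borel probability measure on ℝ supported in the interval [-L/2, L/2]. For R > 0 define ξ_R : ℝ → ℝ by ξ_R(u) = ∫_ℝ ((x - u)² + R²)⁻¹ dμ(x). Then for every t ≥ 4L² and every R > 0, the set {u ∈ ℝ : ξ_R(u) = 1/t} contains at most two points (i.e., for all u₁, u₂, u₃ with ξ_R(u₁) = ξ_R(u₂) = ξ_R(u₃) = 1/t, at least two of u₁, u₂, u₃ are equal). -/

import Mathlib

open MeasureTheory Real Set Filter Topology

section Aux

lemma my_cont (R u : ℝ) (hR : 0 < R) :
    Continuous (fun x : ℝ => ((x - u) ^ 2 + R ^ 2)⁻¹) := by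
  apply Continuous.inv₀ (by fun_prop)
  intro x; positivity

lemma my_int (R : ℝ) (hR : 0 < R) (μ : Measure ℝ) [IsFiniteMeasure μ] (u : ℝ) :
    Integrable (fun x : ℝ => ((x - u) ^ 2 + R ^ 2)⁻¹) μ := by
  apply (integrable_const ((R ^ 2)⁻¹)).mono' (my_cont R u hR).aestronglyMeasurable
  filter_upwards with x
  rw [Real.norm_eq_abs, abs_of_pos (by positivity)]
  exact inv_anti₀ (by positivity) (by nlinarith)

lemma my_ge (L : ℝ) (hL : 0 < L) (μ : Measure ℝ) [IsProbabilityMeasure μ]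
    (hsupp : μ (Set.Icc (-(L / 2)) (L / 2))ᶜ = 0)
    {h : ℝ → ℝ} (hint : Integrable h μ) {ε : ℝ}
    (hε : ∀ x ∈ Set.Icc (-(L / 2)) (L / 2), ε ≤ h x) :
    ε ≤ ∫ x, h x ∂μ := by
  have hae : ∀ᵐ x ∂μ, ε ≤ h x := by
    rw [ae_iff]
    refine measure_mono_null (fun x hx => ?_) hsupp
    simp only [Set.mem_setOf_eq, not_le] at hx
    intro hmem
    exact absurd (hε x hmem) (not_le.mpr hx)
  calc ε = ∫ _, ε ∂μ := by simp
    _ ≤ ∫ x, h x ∂μ := integral_mono_ae (integrable_const ε) hint hae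

lemma my_pos (L : ℝ) (hL : 0 < L) (μ : Measure ℝ) [IsProbabilityMeasure μ]
    (hsupp : μ (Set.Icc (-(L / 2)) (L / 2))ᶜ = 0)
    {h : ℝ → ℝ} (hc : Continuous h) (hint : Integrable h μ)
    (hpos : ∀ x ∈ Set.Icc (-(L / 2)) (L / 2), 0 < h x) :
    0 < ∫ x, h x ∂μ := by
  obtain ⟨x₀, hx₀, hmin⟩ := (isCompact_Icc :
      IsCompact (Set.Icc (-(L / 2)) (L / 2))).exists_isMinOn
    (Set.nonempty_Icc.mpr (by linarith)) hc.continuousOn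
  exact lt_of_lt_of_le (hpos x₀ hx₀) (my_ge L hL μ hsupp hint (fun x hx => hmin hx))

lemma my_sc (L R : ℝ) (hL : 0 < L) (hR : 0 < R) (hLR : 3 * L ^ 2 ≤ R ^ 2) :
    StrictConcaveOn ℝ (Set.Icc (-L) L) (fun y : ℝ => (y ^ 2 + R ^ 2)⁻¹) := by
  have hbase : ∀ y : ℝ, HasDerivAt (fun y : ℝ => y ^ 2 + R ^ 2) (2 * y) y := fun y => by
    simpa using (hasDerivAt_pow 2 y).add_const (R ^ 2)
  have hd1 : deriv (fun y : ℝ => (y ^ 2 + R ^ 2)⁻¹)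
      = fun y => -(2 * y) / (y ^ 2 + R ^ 2) ^ 2 := by
    funext y
    exact ((hbase y).inv (by positivity)).deriv
  apply strictConcaveOn_of_deriv2_neg (convex_Icc _ _)
    (Continuous.continuousOn (Continuous.inv₀ (by fun_prop) (fun y => by positivity)))
  intro y hy
  rw [interior_Icc, Set.mem_Ioo] at hy
  have hy2 : 3 * y ^ 2 < R ^ 2 := by nlinarith [hy.1, hy.2]
  show deriv (deriv (fun y : ℝ => (y ^ 2 + R ^ 2)⁻¹)) y < 0
  rw [hd1]
  have hnum : HasDerivAt (fun y : ℝ => -(2 * y)) (-2) y := by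
    exact (((hasDerivAt_id y).const_mul (2 : ℝ)).neg).congr_deriv (by norm_num)
  have hden2 : HasDerivAt (fun y : ℝ => (y ^ 2 + R ^ 2) ^ 2)
      (2 * (y ^ 2 + R ^ 2) * (2 * y)) y := by
    exact ((hbase y).pow 2).congr_deriv (by norm_num)
  have hsec := hnum.div hden2 (by positivity)
  rw [HasDerivAt.deriv (f := fun y => -(2 * y) / (y ^ 2 + R ^ 2) ^ 2) hsec]
  apply div_neg_of_neg_of_pos _ (by positivity)
  have hP : (0:ℝ) < y ^ 2 + R ^ 2 := by positivity
  nlinarith [mul_pos hP (by nlinarith : (0:ℝ) < 2 * R ^ 2 - 6 * y ^ 2)]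

variable (L : ℝ) (hL : 0 < L) (μ : Measure ℝ) [IsProbabilityMeasure μ]
    (hsupp : μ (Set.Icc (-(L / 2)) (L / 2))ᶜ = 0) (R : ℝ) (hR : 0 < R)

include hL hsupp hR

lemma my_mono_left {u v : ℝ} (huv : u < v) (hv : v ≤ -(L / 2)) :
    ∫ x, ((x - u) ^ 2 + R ^ 2)⁻¹ ∂μ < ∫ x, ((x - v) ^ 2 + R ^ 2)⁻¹ ∂μ := by
  have key : 0 < ∫ x, (((x - v) ^ 2 + R ^ 2)⁻¹ - ((x - u) ^ 2 + R ^ 2)⁻¹) ∂μ := by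
    apply my_pos L hL μ hsupp ((my_cont R v hR).sub (my_cont R u hR))
      ((my_int R hR μ v).sub (my_int R hR μ u))
    intro x hx
    have hx1 : -(L / 2) ≤ x := hx.1
    have h1 : (0:ℝ) < (x - v) ^ 2 + R ^ 2 := by positivity
    have h2 : (x - v) ^ 2 + R ^ 2 < (x - u) ^ 2 + R ^ 2 := by nlinarith
    have := inv_strictAnti₀ h1 h2
    exact sub_pos.mpr this
  rw [integral_sub (my_int R hR μ v) (my_int R hR μ u)] at key
  linarith

lemma my_mono_right {u v : ℝ} (huv : u < v) (hu : L / 2 ≤ u) :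
    ∫ x, ((x - v) ^ 2 + R ^ 2)⁻¹ ∂μ < ∫ x, ((x - u) ^ 2 + R ^ 2)⁻¹ ∂μ := by
  have key : 0 < ∫ x, (((x - u) ^ 2 + R ^ 2)⁻¹ - ((x - v) ^ 2 + R ^ 2)⁻¹) ∂μ := by
    apply my_pos L hL μ hsupp ((my_cont R u hR).sub (my_cont R v hR))
      ((my_int R hR μ u).sub (my_int R hR μ v))
    intro x hx
    have hx2 : x ≤ L / 2 := hx.2
    have h1 : (0:ℝ) < (x - u) ^ 2 + R ^ 2 := by positivity
    have h2 : (x - u) ^ 2 + R ^ 2 < (x - v) ^ 2 + R ^ 2 := by nlinarith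
    have := inv_strictAnti₀ h1 h2
    exact sub_pos.mpr this
  rw [integral_sub (my_int R hR μ u) (my_int R hR μ v)] at key
  linarith

lemma my_mid_lb {u : ℝ} (hu : u ∈ Set.Icc (-(L / 2)) (L / 2)) :
    (L ^ 2 + R ^ 2)⁻¹ ≤ ∫ x, ((x - u) ^ 2 + R ^ 2)⁻¹ ∂μ := by
  apply my_ge L hL μ hsupp (my_int R hR μ u)
  intro x hx
  apply inv_anti₀ (by positivity)
  have := hx.1; have := hx.2; have := hu.1; have := hu.2
  nlinarith

lemma my_concave_mid (hLR : 3 * L ^ 2 ≤ R ^ 2) {p q r : ℝ}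
    (hp : p ∈ Set.Icc (-(L / 2)) (L / 2)) (hr : r ∈ Set.Icc (-(L / 2)) (L / 2))
    (hpq : p < q) (hqr : q < r) {c : ℝ}
    (hcp : c ≤ ∫ x, ((x - p) ^ 2 + R ^ 2)⁻¹ ∂μ)
    (hcr : c ≤ ∫ x, ((x - r) ^ 2 + R ^ 2)⁻¹ ∂μ)
    (hq : ∫ x, ((x - q) ^ 2 + R ^ 2)⁻¹ ∂μ = c) : False := by
  have hpr : p < r := hpq.trans hqr
  set a : ℝ := (r - q) / (r - p) with ha_def
  set b : ℝ := (q - p) / (r - p) with hb_def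
  have hrp : (0:ℝ) < r - p := by linarith
  have ha : 0 < a := div_pos (by linarith) hrp
  have hb : 0 < b := div_pos (by linarith) hrp
  have hab : a + b = 1 := by
    rw [ha_def, hb_def, ← add_div, show r - q + (q - p) = r - p by ring,
      div_self hrp.ne']
  have hsc := my_sc L R hL hR hLR
  have key : 0 < ∫ x, (((x - q) ^ 2 + R ^ 2)⁻¹
      - (a * ((x - p) ^ 2 + R ^ 2)⁻¹ + b * ((x - r) ^ 2 + R ^ 2)⁻¹)) ∂μ := by
    apply my_pos L hL μ hsupp
    · exact (my_cont R q hR).sub ((continuous_const.mul (my_cont R p hR)).add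
        (continuous_const.mul (my_cont R r hR)))
    · exact (my_int R hR μ q).sub ((((my_int R hR μ p).const_mul a)).add
        (((my_int R hR μ r).const_mul b)))
    intro x hx
    have hx1 := hx.1; have hx2 := hx.2
    have hmp : x - p ∈ Set.Icc (-L) L := by
      constructor <;> [linarith [hp.2]; linarith [hp.1]]
    have hmr : x - r ∈ Set.Icc (-L) L := by
      constructor <;> [linarith [hr.2]; linarith [hr.1]]
    have hne : x - p ≠ x - r := by intro h; exact hpr.ne (by linarith)
    have hkey := hsc.2 hmp hmr hne ha hb hab
    simp only [smul_eq_mul] at hkey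
    have harg : a * (x - p) + b * (x - r) = x - q := by
      rw [ha_def, hb_def]
      field_simp
      ring
    rw [harg] at hkey
    linarith
  have hip : Integrable (fun x : ℝ => a * ((x - p) ^ 2 + R ^ 2)⁻¹) μ :=
    (my_int R hR μ p).const_mul a
  have hir : Integrable (fun x : ℝ => b * ((x - r) ^ 2 + R ^ 2)⁻¹) μ :=
    (my_int R hR μ r).const_mul b
  have hint2 : Integrable (fun x : ℝ => a * ((x - p) ^ 2 + R ^ 2)⁻¹
      + b * ((x - r) ^ 2 + R ^ 2)⁻¹) μ := hip.add hir
  rw [integral_sub (my_int R hR μ q) hint2, integral_add hip hir,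
    integral_const_mul, integral_const_mul] at key
  have h1 : a * c + b * c ≤ a * (∫ x, ((x - p) ^ 2 + R ^ 2)⁻¹ ∂μ)
      + b * (∫ x, ((x - r) ^ 2 + R ^ 2)⁻¹ ∂μ) := by
    have := mul_le_mul_of_nonneg_left hcp ha.le
    have := mul_le_mul_of_nonneg_left hcr hb.le
    linarith
  have h2 : a * c + b * c = c := by rw [← add_mul, hab, one_mul]
  linarith

lemma my_helper (t : ℝ) (ht : 4 * L ^ 2 ≤ t) {p q r : ℝ} (hpq : p < q) (hqr : q < r)
    (hp : ∫ x, ((x - p) ^ 2 + R ^ 2)⁻¹ ∂μ = 1 / t)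
    (hq : ∫ x, ((x - q) ^ 2 + R ^ 2)⁻¹ ∂μ = 1 / t)
    (hr : ∫ x, ((x - r) ^ 2 + R ^ 2)⁻¹ ∂μ = 1 / t) : False := by
  have ht0 : 0 < t := lt_of_lt_of_le (by positivity) ht
  have hqa : -(L / 2) < q := by
    by_contra hcon
    push_neg at hcon
    have := my_mono_left L hL μ hsupp R hR hpq hcon
    rw [hp, hq] at this
    exact lt_irrefl _ this
  have hqb : q < L / 2 := by
    by_contra hcon
    push_neg at hcon
    have := my_mono_right L hL μ hsupp R hR hqr hcon
    rw [hq, hr] at this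
    exact lt_irrefl _ this
  have hqIcc : q ∈ Set.Icc (-(L / 2)) (L / 2) := ⟨hqa.le, hqb.le⟩
  have hlb := my_mid_lb L hL μ hsupp R hR hqIcc
  rw [hq] at hlb
  rcases lt_or_ge (R ^ 2) (3 * L ^ 2) with hcase | hcase
  · have h1 : L ^ 2 + R ^ 2 < t := by nlinarith
    have h2 : 1 / t < (L ^ 2 + R ^ 2)⁻¹ := by
      rw [one_div]
      exact inv_strictAnti₀ (by positivity) h1
    linarith
  · set p' := max p (-(L / 2)) with hp'_def
    set r' := min r (L / 2) with hr'_def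
    have hp'q : p' < q := max_lt hpq hqa
    have hqr' : q < r' := lt_min hqr hqb
    have hp'Icc : p' ∈ Set.Icc (-(L / 2)) (L / 2) :=
      ⟨le_max_right _ _, by linarith⟩
    have hr'Icc : r' ∈ Set.Icc (-(L / 2)) (L / 2) :=
      ⟨by linarith, min_le_right _ _⟩
    have hcp : 1 / t ≤ ∫ x, ((x - p') ^ 2 + R ^ 2)⁻¹ ∂μ := by
      rcases le_or_gt (-(L / 2)) p with h | h
      · rw [hp'_def, max_eq_left h, hp]
      · rw [hp'_def, max_eq_right h.le]
        have := my_mono_left L hL μ hsupp R hR h le_rfl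
        rw [hp] at this
        linarith
    have hcr : 1 / t ≤ ∫ x, ((x - r') ^ 2 + R ^ 2)⁻¹ ∂μ := by
      rcases le_or_gt r (L / 2) with h | h
      · rw [hr'_def, min_eq_left h, hr]
      · rw [hr'_def, min_eq_right h.le]
        have := my_mono_right L hL μ hsupp R hR h le_rfl
        rw [hr] at this
        linarith
    exact my_concave_mid L hL μ hsupp R hR hcase hp'Icc hr'Icc hp'q hqr' hcp hcr hq

end Aux

theorem cauchy_level_equation_atMost_two_solutions
    (L : ℝ) (hL : 0 < L) (μ : Measure ℝ) [IsProbabilityMeasure μ]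
    (hsupp : μ (Set.Icc (-(L / 2)) (L / 2))ᶜ = 0)
    (t : ℝ) (ht : 4 * L ^ 2 ≤ t) (R : ℝ) (hR : 0 < R)
    (u₁ u₂ u₃ : ℝ)
    (h₁ : ∫ x, ((x - u₁) ^ 2 + R ^ 2)⁻¹ ∂μ = 1 / t)
    (h₂ : ∫ x, ((x - u₂) ^ 2 + R ^ 2)⁻¹ ∂μ = 1 / t)
    (h₃ : ∫ x, ((x - u₃) ^ 2 + R ^ 2)⁻¹ ∂μ = 1 / t) :
    u₁ = u₂ ∨ u₁ = u₃ ∨ u₂ = u₃ := by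
  by_contra hcon
  push_neg at hcon
  obtain ⟨n12, n13, n23⟩ := hcon
  rcases lt_trichotomy u₁ u₂ with h12 | h12 | h12
  · rcases lt_trichotomy u₂ u₃ with h23 | h23 | h23
    · exact my_helper L hL μ hsupp R hR t ht h12 h23 h₁ h₂ h₃
    · exact n23 h23
    · rcases lt_trichotomy u₁ u₃ with h13 | h13 | h13
      · exact my_helper L hL μ hsupp R hR t ht h13 h23 h₁ h₃ h₂
      · exact n13 h13
      · exact my_helper L hL μ hsupp R hR t ht h13 h12 h₃ h₁ h₂
  · exact n12 h12
  · rcases lt_trichotomy u₁ u₃ with h13 | h13 | h13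
    · exact my_helper L hL μ hsupp R hR t ht h12 h13 h₂ h₁ h₃
    · exact n13 h13
    · rcases lt_trichotomy u₂ u₃ with h23 | h23 | h23
      · exact my_helper L hL μ hsupp R hR t ht h23 h13 h₂ h₃ h₁
      · exact n23 h23
      · exact my_helper L hL μ hsupp R hR t ht h23 h12 h₃ h₂ h₁
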